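/- Let t ≥ 1 be an integer. A signed (2t+1)-regular graph (G,σ) admits a nowhere-zero (2 + 1/t)-flow if and only if (G,σ) admits a modular nowhere-zero (2 + 1/t)-flow and G has a t-factor. -/

import Mathlib

open Finset

/-- A finite loopless multigraph with vertex type `V` and edge type `E`;
`ends e` is the unordered pair of the two distinct endpoints of the edge `e`. -/
structure Multigraph (V E : Type) where
  ends : E → Sym2 V
  not_loop : ∀ e, ¬ (ends e).IsDiag

namespace Multigraph

variable {V E : Type} [Fintype V] [Fintype E] [DecidableEq V] [DecidableEq E]

/-- The edge `e` is incident with the vertex `v`. -/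
def Inc (G : Multigraph V E) (v : V) (e : E) : Prop := v ∈ G.ends e

instance (G : Multigraph V E) (v : V) (e : E) : Decidable (G.Inc v e) :=
  inferInstanceAs (Decidable (v ∈ G.ends e))

/-- The set of edges incident with `v`. -/
def incEdges (G : Multigraph V E) (v : V) : Finset E :=
  Finset.univ.filter fun e => G.Inc v e

/-- The degree of a vertex. -/
def degree (G : Multigraph V E) (v : V) : ℕ := (G.incEdges v).card

/-- `G` is `k`-regular. -/
def IsRegular (G : Multigraph V E) (k : ℕ) : Prop := ∀ v, G.degree v = k

/-- The set `N_σ` of negative edges of a signature `σ : E → ℤˣ`. -/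
def negEdges (G : Multigraph V E) (σ : E → ℤˣ) : Finset E :=
  Finset.univ.filter fun e => σ e = -1

/-- `τ` assigns a sign to every half-edge (i.e. to each edge at each of its endpoints);
it is an orientation of the signed graph `(G, σ)` if for every edge `e = uv` the two
half-edge signs multiply to `-σ e`. -/
def IsOrientation (G : Multigraph V E) (σ : E → ℤˣ) (τ : E → V → ℤˣ) : Prop :=
  ∀ e u v, G.ends e = s(u, v) → τ e u * τ e v = - σ e

/-- The boundary `δf(v) = ∑_{h at v} τ(h) f(e_h)` of `f` at `v`. -/
def boundary {R : Type} [CommRing R] (G : Multigraph V E) (τ : E → V → ℤˣ)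
    (f : E → R) (v : V) : R :=
  ∑ e ∈ G.incEdges v, (((τ e v : ℤˣ) : ℤ) : R) * f e

/-- `f` is a nowhere-zero `r`-flow on the signed graph `(G, σ)`:
for some orientation all boundaries vanish and `1 ≤ |f e| ≤ r - 1` for every edge. -/
def IsNZFlow (G : Multigraph V E) (σ : E → ℤˣ) (r : ℝ) (f : E → ℝ) : Prop :=
  ∃ τ, G.IsOrientation σ τ ∧ (∀ v, G.boundary τ f v = 0) ∧
    ∀ e, 1 ≤ |f e| ∧ |f e| ≤ r - 1

/-- `(G, σ)` admits a nowhere-zero `r`-flow. -/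
def HasNZFlow (G : Multigraph V E) (σ : E → ℤˣ) (r : ℝ) : Prop :=
  ∃ f, G.IsNZFlow σ r f

/-- `f` is a modular nowhere-zero `r`-flow on `(G, σ)`: for some orientation all
boundaries are `≡ 0 (mod r)` and `1 ≤ |f e| ≤ r - 1` for every edge. -/
def IsModularNZFlow (G : Multigraph V E) (σ : E → ℤˣ) (r : ℝ) (f : E → ℝ) : Prop :=
  ∃ τ, G.IsOrientation σ τ ∧ (∀ v, ∃ k : ℤ, G.boundary τ f v = k * r) ∧
    ∀ e, 1 ≤ |f e| ∧ |f e| ≤ r - 1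

/-- `f` is an integer-valued nowhere-zero `n`-flow on `(G, σ)`. -/
def IsIntNZFlow (G : Multigraph V E) (σ : E → ℤˣ) (n : ℕ) (f : E → ℤ) : Prop :=
  ∃ τ, G.IsOrientation σ τ ∧ (∀ v, G.boundary τ f v = 0) ∧
    ∀ e, 1 ≤ |f e| ∧ |f e| ≤ (n : ℤ) - 1

/-- `(G, σ)` admits an integer nowhere-zero `n`-flow. -/
def HasIntNZFlow (G : Multigraph V E) (σ : E → ℤˣ) (n : ℕ) : Prop :=
  ∃ f, G.IsIntNZFlow σ n f

/-- `(G, σ)` is flow-admissible: it has a nowhere-zero `r`-flow for some `r ≥ 2`. -/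
def FlowAdmissible (G : Multigraph V E) (σ : E → ℤˣ) : Prop :=
  ∃ r : ℝ, 2 ≤ r ∧ G.HasNZFlow σ r

/-- The circular flow number `F_c(G, σ)` (the least `r` admitting a nowhere-zero `r`-flow). -/
noncomputable def Fc (G : Multigraph V E) (σ : E → ℤˣ) : ℝ :=
  sInf {r : ℝ | 2 ≤ r ∧ G.HasNZFlow σ r}

/-- The integer flow number `F(G, σ)` (the least `n` admitting an integer
nowhere-zero `n`-flow). -/
noncomputable def Fi (G : Multigraph V E) (σ : E → ℤˣ) : ℕ :=
  sInf {n : ℕ | G.HasIntNZFlow σ n}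

/-- The flow spectrum `S(G)` of `G`. -/
def Spectrum (G : Multigraph V E) : Set ℝ :=
  {r | ∃ σ : E → ℤˣ, G.FlowAdmissible σ ∧ G.Fc σ = r}

/-- The integer flow spectrum `S̄(G)` of `G`. -/
def IntSpectrum (G : Multigraph V E) : Set ℕ :=
  {n | ∃ σ : E → ℤˣ, G.FlowAdmissible σ ∧ G.Fi σ = n}

/-- `F` is the edge set of a spanning `t`-regular subgraph (a `t`-factor) of `G`. -/
def IsFactor (G : Multigraph V E) (t : ℕ) (F : Finset E) : Prop :=
  ∀ v, (G.incEdges v ∩ F).card = t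

/-- `G` has a `t`-factor. -/
def HasFactor (G : Multigraph V E) (t : ℕ) : Prop := ∃ F, G.IsFactor t F

/-- `G - X` is bipartite. -/
def BipartiteOff (G : Multigraph V E) (X : Finset E) : Prop :=
  ∃ c : V → Bool, ∀ e ∉ X, ∀ u v, G.ends e = s(u, v) → c u ≠ c v

/-- `G` is bipartite. -/
def Bipartite (G : Multigraph V E) : Prop := G.BipartiteOff ∅

/-- `X` is an `r`-minimal set: some signature `σ` with `N_σ = X` has circular flow
number `r`, while no signature whose negative edge set is a proper subset of `X`
has circular flow number `r`. -/
def IsRMinimal (G : Multigraph V E) (r : ℝ) (X : Finset E) : Prop :=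
  (∃ σ, G.negEdges σ = X ∧ G.FlowAdmissible σ ∧ G.Fc σ = r) ∧
  ∀ σ, G.negEdges σ ⊂ X → ¬ (G.FlowAdmissible σ ∧ G.Fc σ = r)

/-- `X` is an `r`-minimal set of minimum cardinality. -/
def IsSmallestRMinimal (G : Multigraph V E) (r : ℝ) (X : Finset E) : Prop :=
  G.IsRMinimal r X ∧ ∀ Y, G.IsRMinimal r Y → X.card ≤ Y.card

end Multigraph

open Multigraph

section Aux

variable {V E : Type} [Fintype V] [Fintype E] [DecidableEq V] [DecidableEq E]

private lemma units_neg_of_ne {a b : ℤˣ} (h : a ≠ b) : a = -b := by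
  rcases Int.units_eq_one_or a with ha | ha <;> rcases Int.units_eq_one_or b with hb | hb <;>
    simp_all

private lemma flip_aux (G : Multigraph V E) (σ : E → ℤˣ) (τ : E → V → ℤˣ) (f : E → ℝ)
    (hor : G.IsOrientation σ τ) :
    ∃ τ' : E → V → ℤˣ, G.IsOrientation σ τ' ∧
      ∀ v, G.boundary τ' (fun e => |f e|) v = G.boundary τ f v := by
  refine ⟨fun e w => if 0 ≤ f e then τ e w else -(τ e w), ?_, ?_⟩
  · intro e u w h
    by_cases hfe : 0 ≤ f e
    · simp only [hfe, if_true]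
      exact hor e u w h
    · simp only [hfe, if_false, neg_mul_neg]
      exact hor e u w h
  · intro v
    unfold Multigraph.boundary
    refine Finset.sum_congr rfl fun e _ => ?_
    by_cases hfe : 0 ≤ f e
    · simp only [hfe, if_true, abs_of_nonneg hfe]
    · simp only [hfe, if_false, abs_of_neg (lt_of_not_ge hfe), Units.val_neg, Int.cast_neg,
        neg_mul, mul_neg, neg_neg]

private lemma vertex_lemma (t : ℕ) (ht : 1 ≤ t) (G : Multigraph V E) (τ : E → V → ℤˣ)
    (f : E → ℝ) (v : V) (hdeg : G.degree v = 2 * t + 1)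
    (hf : ∀ e ∈ G.incEdges v, 1 ≤ f e ∧ f e ≤ 1 + 1 / (t : ℝ))
    (k : ℤ) (hδ : G.boundary τ f v = (k : ℝ) * (2 + 1 / (t : ℝ))) :
    ∃ s : ℤˣ, ∀ e ∈ G.incEdges v, f e = if τ e v = s then 1 + 1 / (t : ℝ) else 1 := by
  have hT : (0 : ℝ) < (t : ℝ) := by exact_mod_cast Nat.pos_of_ne_zero (by omega)
  set T : ℝ := (t : ℝ) with hTdef
  have hTne : T ≠ 0 := ne_of_gt hT
  set I := G.incEdges v with hI
  set A := I.filter (fun e => τ e v = 1) with hA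
  set B := I.filter (fun e => ¬ τ e v = 1) with hB
  have hBmem : ∀ e ∈ B, τ e v = -1 := by
    intro e he
    rcases Int.units_eq_one_or (τ e v) with h | h
    · exact absurd h (Finset.mem_filter.mp he).2
    · exact h
  have hcard : A.card + B.card = 2 * t + 1 := by
    rw [hA, hB, Finset.card_filter_add_card_filter_not, hI]
    exact hdeg
  set SA := ∑ e ∈ A, f e with hSA
  set SB := ∑ e ∈ B, f e with hSB
  have h0 : G.boundary τ f v = (∑ e ∈ A, (((τ e v : ℤˣ) : ℤ) : ℝ) * f e)
      + ∑ e ∈ B, (((τ e v : ℤˣ) : ℤ) : ℝ) * f e := by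
    rw [hA, hB, hI]
    exact (Finset.sum_filter_add_sum_filter_not (G.incEdges v) (fun e => τ e v = 1) _).symm
  have e1 : ∑ e ∈ A, (((τ e v : ℤˣ) : ℤ) : ℝ) * f e = SA := by
    refine Finset.sum_congr rfl fun e he => ?_
    rw [(Finset.mem_filter.mp he).2]; simp
  have e2 : ∑ e ∈ B, (((τ e v : ℤˣ) : ℤ) : ℝ) * f e = -SB := by
    rw [hSB, ← Finset.sum_neg_distrib]
    refine Finset.sum_congr rfl fun e he => ?_
    rw [hBmem e he]; simp
  have hsplit : G.boundary τ f v = SA - SB := by rw [h0, e1, e2]; ring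
  have hSAge : (A.card : ℝ) ≤ SA := by
    calc (A.card : ℝ) = ∑ _e ∈ A, (1 : ℝ) := by rw [Finset.sum_const, nsmul_eq_mul, mul_one]
      _ ≤ SA := Finset.sum_le_sum fun e he => (hf e (Finset.mem_of_mem_filter e he)).1
  have hSAle : SA ≤ (A.card : ℝ) * (1 + 1 / T) := by
    calc SA ≤ ∑ _e ∈ A, (1 + 1 / T) :=
          Finset.sum_le_sum fun e he => (hf e (Finset.mem_of_mem_filter e he)).2
      _ = (A.card : ℝ) * (1 + 1 / T) := by rw [Finset.sum_const, nsmul_eq_mul]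
  have hSBge : (B.card : ℝ) ≤ SB := by
    calc (B.card : ℝ) = ∑ _e ∈ B, (1 : ℝ) := by rw [Finset.sum_const, nsmul_eq_mul, mul_one]
      _ ≤ SB := Finset.sum_le_sum fun e he => (hf e (Finset.mem_of_mem_filter e he)).1
  have hSBle : SB ≤ (B.card : ℝ) * (1 + 1 / T) := by
    calc SB ≤ ∑ _e ∈ B, (1 + 1 / T) :=
          Finset.sum_le_sum fun e he => (hf e (Finset.mem_of_mem_filter e he)).2
      _ = (B.card : ℝ) * (1 + 1 / T) := by rw [Finset.sum_const, nsmul_eq_mul]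
  have hr : T * (2 + 1 / T) = 2 * T + 1 := by field_simp
  have h1T : T * (1 + 1 / T) = T + 1 := by field_simp
  have hδ2 : SA - SB = (k : ℝ) * (2 + 1 / T) := by rw [← hsplit]; exact hδ
  have habc : (A.card : ℝ) + (B.card : ℝ) = 2 * T + 1 := by
    rw [hTdef]; exact_mod_cast hcard
  have habcT : T * (A.card : ℝ) + T * (B.card : ℝ) = T * (2 * T + 1) := by
    rw [← mul_add, habc]
  have hTδ : T * SA - T * SB = (k : ℝ) * (2 * T + 1) := by
    calc T * SA - T * SB = T * (SA - SB) := by ring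
      _ = T * ((k : ℝ) * (2 + 1 / T)) := by rw [hδ2]
      _ = (k : ℝ) * (T * (2 + 1 / T)) := by ring
      _ = (k : ℝ) * (2 * T + 1) := by rw [hr]
  have hTSAle : T * SA ≤ (A.card : ℝ) * (T + 1) := by
    calc T * SA ≤ T * ((A.card : ℝ) * (1 + 1 / T)) := mul_le_mul_of_nonneg_left hSAle hT.le
      _ = (A.card : ℝ) * (T * (1 + 1 / T)) := by ring
      _ = (A.card : ℝ) * (T + 1) := by rw [h1T]
  have hTSAge : T * (A.card : ℝ) ≤ T * SA := mul_le_mul_of_nonneg_left hSAge hT.le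
  have hTSBle : T * SB ≤ (B.card : ℝ) * (T + 1) := by
    calc T * SB ≤ T * ((B.card : ℝ) * (1 + 1 / T)) := mul_le_mul_of_nonneg_left hSBle hT.le
      _ = (B.card : ℝ) * (T * (1 + 1 / T)) := by ring
      _ = (B.card : ℝ) * (T + 1) := by rw [h1T]
  have hTSBge : T * (B.card : ℝ) ≤ T * SB := mul_le_mul_of_nonneg_left hSBge hT.le
  have hkle : (k : ℝ) ≤ (A.card : ℝ) - T := by
    refine le_of_mul_le_mul_right ?_ (show (0 : ℝ) < 2 * T + 1 by linarith)
    linarith only [hTδ, hTSAle, hTSBge, habcT, habc]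
  have hkge : (A.card : ℝ) - T - 1 ≤ (k : ℝ) := by
    refine le_of_mul_le_mul_right ?_ (show (0 : ℝ) < 2 * T + 1 by linarith)
    linarith only [hTδ, hTSAge, hTSBle, habcT, habc]
  have hkle' : k ≤ (A.card : ℤ) - (t : ℤ) := by
    have h2 : ((k : ℤ) : ℝ) ≤ (((A.card : ℤ) - (t : ℤ) : ℤ) : ℝ) := by
      push_cast
      rw [← hTdef]
      linarith [hkle]
    exact_mod_cast h2
  have hkge' : (A.card : ℤ) - (t : ℤ) - 1 ≤ k := by
    have h2 : ((((A.card : ℤ) - (t : ℤ) - 1 : ℤ)) : ℝ) ≤ ((k : ℤ) : ℝ) := by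
      push_cast
      rw [← hTdef]
      linarith [hkge]
    exact_mod_cast h2
  have hne1 : (1 : ℝ) + 1 / T ≠ 1 := by
    have : (0 : ℝ) < 1 / T := by positivity
    linarith
  have hkcases : k = (A.card : ℤ) - t ∨ k = (A.card : ℤ) - t - 1 := by omega
  rcases hkcases with hk | hk
  · -- k = |A| - t : A-edges carry 1+1/T, B-edges carry 1
    have hkr : (k : ℝ) = (A.card : ℝ) - T := by
      rw [hk]; push_cast; rw [hTdef]
    have hTδ' : T * SA - T * SB = ((A.card : ℝ) - T) * (2 * T + 1) := by
      rw [← hkr]; exact hTδ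
    have h5 : (A.card : ℝ) * (T + 1) ≤ T * SA := by linarith only [hTδ', hTSBge, habcT, habc]
    have hSAeq : SA = (A.card : ℝ) * (1 + 1 / T) := by
      refine le_antisymm hSAle ?_
      have h6 : T * ((A.card : ℝ) * (1 + 1 / T)) ≤ T * SA := by
        calc T * ((A.card : ℝ) * (1 + 1 / T)) = (A.card : ℝ) * (T * (1 + 1 / T)) := by ring
          _ = (A.card : ℝ) * (T + 1) := by rw [h1T]
          _ ≤ T * SA := h5
      exact le_of_mul_le_mul_left h6 hT
    have h7 : T * SB ≤ T * (B.card : ℝ) := by linarith only [hTδ', hTSAle, habcT, habc]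
    have hSBeq : SB = (B.card : ℝ) := le_antisymm (le_of_mul_le_mul_left h7 hT) hSBge
    have hAall : ∀ e ∈ A, f e = 1 + 1 / T := by
      refine (Finset.sum_eq_sum_iff_of_le
        (fun i hi => (hf i (Finset.mem_of_mem_filter i hi)).2)).mp ?_
      rw [Finset.sum_const, nsmul_eq_mul]
      exact hSAeq
    have hBall : ∀ e ∈ B, f e = 1 := by
      intro e he
      exact ((Finset.sum_eq_sum_iff_of_le
        (fun i hi => (hf i (Finset.mem_of_mem_filter i hi)).1)).mp
        (by rw [Finset.sum_const, nsmul_eq_mul, mul_one]; exact hSBeq.symm) e he).symm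
    refine ⟨1, fun e he => ?_⟩
    by_cases hτ : τ e v = 1
    · rw [if_pos hτ]; exact hAall e (Finset.mem_filter.mpr ⟨he, hτ⟩)
    · rw [if_neg hτ]; exact hBall e (Finset.mem_filter.mpr ⟨he, hτ⟩)
  · -- k = |A| - t - 1 : A-edges carry 1, B-edges carry 1+1/T
    have hkr : (k : ℝ) = (A.card : ℝ) - T - 1 := by
      rw [hk]; push_cast; rw [hTdef]
    have hTδ' : T * SA - T * SB = ((A.card : ℝ) - T - 1) * (2 * T + 1) := by
      rw [← hkr]; exact hTδ
    have h5 : T * SA ≤ T * (A.card : ℝ) := by linarith only [hTδ', hTSBle, habcT, habc]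
    have hSAeq : SA = (A.card : ℝ) := le_antisymm (le_of_mul_le_mul_left h5 hT) hSAge
    have h7 : (B.card : ℝ) * (T + 1) ≤ T * SB := by linarith only [hTδ', hTSAge, habcT, habc]
    have hSBeq : SB = (B.card : ℝ) * (1 + 1 / T) := by
      refine le_antisymm hSBle ?_
      have h6 : T * ((B.card : ℝ) * (1 + 1 / T)) ≤ T * SB := by
        calc T * ((B.card : ℝ) * (1 + 1 / T)) = (B.card : ℝ) * (T * (1 + 1 / T)) := by ring
          _ = (B.card : ℝ) * (T + 1) := by rw [h1T]
          _ ≤ T * SB := h7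
      exact le_of_mul_le_mul_left h6 hT
    have hAall : ∀ e ∈ A, f e = 1 := by
      intro e he
      exact ((Finset.sum_eq_sum_iff_of_le
        (fun i hi => (hf i (Finset.mem_of_mem_filter i hi)).1)).mp
        (by rw [Finset.sum_const, nsmul_eq_mul, mul_one]; exact hSAeq.symm) e he).symm
    have hBall : ∀ e ∈ B, f e = 1 + 1 / T := by
      refine (Finset.sum_eq_sum_iff_of_le
        (fun i hi => (hf i (Finset.mem_of_mem_filter i hi)).2)).mp ?_
      rw [Finset.sum_const, nsmul_eq_mul]
      exact hSBeq
    have hne2 : ((1 : ℤˣ)) ≠ -1 := by decide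
    refine ⟨-1, fun e he => ?_⟩
    by_cases hτ : τ e v = 1
    · rw [if_neg (by rw [hτ]; exact hne2)]
      exact hAall e (Finset.mem_filter.mpr ⟨he, hτ⟩)
    · have hτ' : τ e v = -1 := hBmem e (Finset.mem_filter.mpr ⟨he, hτ⟩)
      rw [if_pos hτ']
      exact hBall e (Finset.mem_filter.mpr ⟨he, hτ⟩)

end Aux
/-- Let `t ≥ 1`.  A signed `(2t+1)`-regular graph `(G, σ)` admits a nowhere-zero
`(2 + 1/t)`-flow if and only if `(G, σ)` admits a modular nowhere-zero
`(2 + 1/t)`-flow and `G` has a `t`-factor. -/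
theorem stmt3 {V E : Type} [Fintype V] [Fintype E] [DecidableEq V] [DecidableEq E]
    (t : ℕ) (ht : 1 ≤ t) (G : Multigraph V E) (σ : E → ℤˣ)
    (hreg : G.IsRegular (2 * t + 1)) :
    G.HasNZFlow σ (2 + 1 / (t : ℝ)) ↔
      (∃ f, G.IsModularNZFlow σ (2 + 1 / (t : ℝ)) f) ∧ G.HasFactor t := by
  have hT : (0 : ℝ) < (t : ℝ) := by exact_mod_cast Nat.pos_of_ne_zero (by omega)
  have hTne : (t : ℝ) ≠ 0 := ne_of_gt hT
  have hTinv : (0 : ℝ) < 1 / (t : ℝ) := by positivity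
  have hne1 : (1 : ℝ) + 1 / (t : ℝ) ≠ 1 := by linarith
  have hr2 : (t : ℝ) * (2 + 1 / (t : ℝ)) = 2 * (t : ℝ) + 1 := by field_simp
  constructor
  · rintro ⟨f, τ, hor, hbd, hbnd⟩
    obtain ⟨τ', hor', hbd'⟩ := flip_aux G σ τ f hor
    have hbd0 : ∀ v, G.boundary τ' (fun e => |f e|) v = 0 := fun v => by rw [hbd' v, hbd v]
    have hf' : ∀ v, ∀ e ∈ G.incEdges v, 1 ≤ |f e| ∧ |f e| ≤ 1 + 1 / (t : ℝ) := by
      intro v e _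
      refine ⟨(hbnd e).1, ?_⟩
      have h2 := (hbnd e).2
      linarith
    have hs0 : ∀ v, ∃ s : ℤˣ, ∀ e ∈ G.incEdges v,
        |f e| = if τ' e v = s then 1 + 1 / (t : ℝ) else 1 := by
      intro v
      exact vertex_lemma t ht G τ' (fun e => |f e|) v (hreg v) (hf' v) 0
        (by rw [hbd0 v]; simp)
    choose s hs using hs0
    refine ⟨⟨f, τ, hor, fun v => ⟨0, by rw [hbd v]; simp⟩, hbnd⟩, ?_⟩
    refine ⟨Finset.univ.filter (fun e => |f e| = 1 + 1 / (t : ℝ)), fun v => ?_⟩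
    have hCeq : G.incEdges v ∩ Finset.univ.filter (fun e => |f e| = 1 + 1 / (t : ℝ))
        = (G.incEdges v).filter (fun e => τ' e v = s v) := by
      ext e
      simp only [Finset.mem_inter, Finset.mem_filter, Finset.mem_univ, true_and]
      constructor
      · rintro ⟨he, hfe⟩
        refine ⟨he, ?_⟩
        by_contra hc
        rw [hs v e he, if_neg hc] at hfe
        exact hne1 hfe.symm
      · rintro ⟨he, hτ⟩
        exact ⟨he, by rw [hs v e he, if_pos hτ]⟩
    rw [hCeq]
    -- compute the cardinality from the zero boundary
    have h0 : (0 : ℝ) = (∑ e ∈ (G.incEdges v).filter (fun e => τ' e v = s v),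
          (((τ' e v : ℤˣ) : ℤ) : ℝ) * |f e|)
        + ∑ e ∈ (G.incEdges v).filter (fun e => ¬ τ' e v = s v),
          (((τ' e v : ℤˣ) : ℤ) : ℝ) * |f e| := by
      rw [← hbd0 v]
      exact (Finset.sum_filter_add_sum_filter_not (G.incEdges v) (fun e => τ' e v = s v) _).symm
    have e1 : ∑ e ∈ (G.incEdges v).filter (fun e => τ' e v = s v),
          (((τ' e v : ℤˣ) : ℤ) : ℝ) * |f e|
        = (((G.incEdges v).filter (fun e => τ' e v = s v)).card : ℝ)
            * ((((s v : ℤˣ) : ℤ) : ℝ) * (1 + 1 / (t : ℝ))) := by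
      calc ∑ e ∈ (G.incEdges v).filter (fun e => τ' e v = s v),
            (((τ' e v : ℤˣ) : ℤ) : ℝ) * |f e|
          = ∑ _e ∈ (G.incEdges v).filter (fun e => τ' e v = s v),
            ((((s v : ℤˣ) : ℤ) : ℝ) * (1 + 1 / (t : ℝ))) := by
            refine Finset.sum_congr rfl fun e he => ?_
            have h2 := (Finset.mem_filter.mp he).2
            rw [hs v e (Finset.mem_of_mem_filter e he), h2, if_pos rfl]
        _ = _ := by rw [Finset.sum_const, nsmul_eq_mul]
    have e2 : ∑ e ∈ (G.incEdges v).filter (fun e => ¬ τ' e v = s v),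
          (((τ' e v : ℤˣ) : ℤ) : ℝ) * |f e|
        = (((G.incEdges v).filter (fun e => ¬ τ' e v = s v)).card : ℝ)
            * (-((((s v : ℤˣ) : ℤ) : ℝ))) := by
      calc ∑ e ∈ (G.incEdges v).filter (fun e => ¬ τ' e v = s v),
            (((τ' e v : ℤˣ) : ℤ) : ℝ) * |f e|
          = ∑ _e ∈ (G.incEdges v).filter (fun e => ¬ τ' e v = s v),
            (-((((s v : ℤˣ) : ℤ) : ℝ))) := by
            refine Finset.sum_congr rfl fun e he => ?_
            have h2 := (Finset.mem_filter.mp he).2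
            have h3 := units_neg_of_ne h2
            rw [hs v e (Finset.mem_of_mem_filter e he), if_neg h2, h3, mul_one]
            simp only [Units.val_neg, Int.cast_neg]
        _ = _ := by rw [Finset.sum_const, nsmul_eq_mul]
    have hcd : ((G.incEdges v).filter (fun e => τ' e v = s v)).card
        + ((G.incEdges v).filter (fun e => ¬ τ' e v = s v)).card = 2 * t + 1 := by
      rw [Finset.card_filter_add_card_filter_not]
      exact hreg v
    rw [e1, e2] at h0
    set cC := ((G.incEdges v).filter (fun e => τ' e v = s v)).card with hcC
    set cD := ((G.incEdges v).filter (fun e => ¬ τ' e v = s v)).card with hcD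
    have hcdR : (cC : ℝ) + (cD : ℝ) = 2 * (t : ℝ) + 1 := by exact_mod_cast hcd
    have hcdval : (cD : ℝ) = (cC : ℝ) * (1 + 1 / (t : ℝ)) := by
      rcases Int.units_eq_one_or (s v) with hsv | hsv <;>
        rw [hsv] at h0 <;>
        simp only [Units.val_one, Units.val_neg, Int.cast_one, Int.cast_neg, one_mul, mul_one,
          neg_neg, mul_neg, neg_mul] at h0 <;>
        linarith [h0]
    have h9 : (cC : ℝ) * (2 + 1 / (t : ℝ)) = (t : ℝ) * (2 + 1 / (t : ℝ)) := by
      rw [hr2]; linarith [hcdval, hcdR]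
    have h10 : (cC : ℝ) = (t : ℝ) :=
      mul_right_cancel₀ (by positivity) h9
    exact_mod_cast h10
  · rintro ⟨⟨f, τ, hor, hmod, hbnd⟩, F₀, hF₀⟩
    obtain ⟨τ', hor', hbd'⟩ := flip_aux G σ τ f hor
    have hf' : ∀ v, ∀ e ∈ G.incEdges v, 1 ≤ |f e| ∧ |f e| ≤ 1 + 1 / (t : ℝ) := by
      intro v e _
      refine ⟨(hbnd e).1, ?_⟩
      have h2 := (hbnd e).2
      linarith
    have hs0 : ∀ v, ∃ s : ℤˣ, ∀ e ∈ G.incEdges v,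
        |f e| = if τ' e v = s then 1 + 1 / (t : ℝ) else 1 := by
      intro v
      obtain ⟨k, hk⟩ := hmod v
      exact vertex_lemma t ht G τ' (fun e => |f e|) v (hreg v) (hf' v) k
        (by rw [hbd' v]; exact hk)
    choose s hs using hs0
    have hσ : ∀ e u w, G.ends e = s(u, w) → s u * s w = -σ e := by
      intro e u w h
      have hu : e ∈ G.incEdges u := by
        exact Finset.mem_filter.mpr ⟨Finset.mem_univ _, show u ∈ G.ends e by rw [h]; exact Sym2.mem_mk_left u w⟩
      have hw : e ∈ G.incEdges w := by
        exact Finset.mem_filter.mpr ⟨Finset.mem_univ _, show w ∈ G.ends e by rw [h]; exact Sym2.mem_mk_right u w⟩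
      have h1 := hs u e hu
      have h2 := hs w e hw
      have hτ := hor' e u w h
      by_cases c1 : τ' e u = s u
      · by_cases c2 : τ' e w = s w
        · rw [← c1, ← c2]; exact hτ
        · rw [if_pos c1] at h1
          rw [if_neg c2] at h2
          exact absurd (h1.symm.trans h2) hne1
      · by_cases c2 : τ' e w = s w
        · rw [if_neg c1] at h1
          rw [if_pos c2] at h2
          exact absurd (h2.symm.trans h1) hne1
        · have d1 := units_neg_of_ne c1
          have d2 := units_neg_of_ne c2
          rw [d1, d2, neg_mul_neg] at hτ
          exact hτ
    refine ⟨fun e => if e ∈ F₀ then 1 + 1 / (t : ℝ) else 1,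
      fun e w => if e ∈ F₀ then s w else -(s w), ?_, ?_, ?_⟩
    · intro e u w h
      by_cases hF : e ∈ F₀
      · simp only [hF, if_true]
        exact hσ e u w h
      · simp only [hF, if_false, neg_mul_neg]
        exact hσ e u w h
    · intro v
      have hc1 : ((G.incEdges v).filter (fun e => e ∈ F₀)).card = t := by
        rw [Finset.filter_mem_eq_inter]
        exact hF₀ v
      have hc2 : ((G.incEdges v).filter (fun e => ¬ e ∈ F₀)).card = t + 1 := by
        have h3 := Finset.card_filter_add_card_filter_not
          (s := G.incEdges v) (fun e => e ∈ F₀)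
        have h4 : (G.incEdges v).card = 2 * t + 1 := hreg v
        omega
      have h0 : G.boundary (fun e w => if e ∈ F₀ then s w else -(s w))
          (fun e => if e ∈ F₀ then 1 + 1 / (t : ℝ) else 1) v
          = (∑ e ∈ (G.incEdges v).filter (fun e => e ∈ F₀),
              ((((if e ∈ F₀ then s v else -(s v)) : ℤˣ) : ℤ) : ℝ)
                * (if e ∈ F₀ then 1 + 1 / (t : ℝ) else 1))
            + ∑ e ∈ (G.incEdges v).filter (fun e => ¬ e ∈ F₀),
              ((((if e ∈ F₀ then s v else -(s v)) : ℤˣ) : ℤ) : ℝ)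
                * (if e ∈ F₀ then 1 + 1 / (t : ℝ) else 1) :=
        (Finset.sum_filter_add_sum_filter_not (G.incEdges v) (fun e => e ∈ F₀) _).symm
      rw [h0]
      have e1 : ∑ e ∈ (G.incEdges v).filter (fun e => e ∈ F₀),
            ((((if e ∈ F₀ then s v else -(s v)) : ℤˣ) : ℤ) : ℝ)
              * (if e ∈ F₀ then 1 + 1 / (t : ℝ) else 1)
          = (t : ℝ) * ((((s v : ℤˣ) : ℤ) : ℝ) * (1 + 1 / (t : ℝ))) := by
        calc ∑ e ∈ (G.incEdges v).filter (fun e => e ∈ F₀),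
              ((((if e ∈ F₀ then s v else -(s v)) : ℤˣ) : ℤ) : ℝ)
                * (if e ∈ F₀ then 1 + 1 / (t : ℝ) else 1)
            = ∑ _e ∈ (G.incEdges v).filter (fun e => e ∈ F₀),
              ((((s v : ℤˣ) : ℤ) : ℝ) * (1 + 1 / (t : ℝ))) := by
              refine Finset.sum_congr rfl fun e he => ?_
              have hF := (Finset.mem_filter.mp he).2
              rw [if_pos hF, if_pos hF]
          _ = _ := by rw [Finset.sum_const, hc1, nsmul_eq_mul]
      have e2 : ∑ e ∈ (G.incEdges v).filter (fun e => ¬ e ∈ F₀),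
            ((((if e ∈ F₀ then s v else -(s v)) : ℤˣ) : ℤ) : ℝ)
              * (if e ∈ F₀ then 1 + 1 / (t : ℝ) else 1)
          = ((t : ℝ) + 1) * (-((((s v : ℤˣ) : ℤ) : ℝ))) := by
        calc ∑ e ∈ (G.incEdges v).filter (fun e => ¬ e ∈ F₀),
              ((((if e ∈ F₀ then s v else -(s v)) : ℤˣ) : ℤ) : ℝ)
                * (if e ∈ F₀ then 1 + 1 / (t : ℝ) else 1)
            = ∑ _e ∈ (G.incEdges v).filter (fun e => ¬ e ∈ F₀),
              (-((((s v : ℤˣ) : ℤ) : ℝ))) := by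
              refine Finset.sum_congr rfl fun e he => ?_
              have hF := (Finset.mem_filter.mp he).2
              rw [if_neg hF, if_neg hF, mul_one]
              simp only [Units.val_neg, Int.cast_neg]
          _ = _ := by
              rw [Finset.sum_const, hc2, nsmul_eq_mul]
              push_cast
              ring
      rw [e1, e2]
      field_simp
      ring
    · intro e
      by_cases hF : e ∈ F₀
      · simp only [hF, if_true]
        rw [abs_of_pos (by positivity)]
        constructor
        · linarith
        · linarith
      · simp only [hF, if_false]
        rw [abs_one]
        constructor
        · exact le_refl 1
        · linarith
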